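/- arXiv:math/9810072 — 2 statements merged into one kernel-verified Lean document; each statement's English description precedes it below -/
import Mathlib

section
/- For any topological space (X, 𝒯), a subset A ⊆ X is sg-closed in (X, 𝒯) if and only if A is sg-closed in (X, 𝒯^α), i.e. SGC(X, 𝒯) = SGC(X, 𝒯^α). -/
open Set TopologicalSpace

universe u v

variable {X : Type u} {Y : Type v}

/-- A set is an α-set (α-open) w.r.t. the topology `T` if `A ⊆ Int (Cl (Int A))`. -/
def AlphaOpen (T : TopologicalSpace X) (A : Set X) : Prop :=
  letI := T
  A ⊆ interior (closure (interior A))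

/-- The α-topology `𝒯^α`, whose open sets are exactly the α-sets of `T`. -/
def alphaTop (T : TopologicalSpace X) : TopologicalSpace X :=
  letI := T
  { IsOpen := fun A => A ⊆ interior (closure (interior A))
    isOpen_univ := by simp
    isOpen_inter := by
      intro A B hA hB
      have hsub : interior (closure (interior A)) ∩ interior (closure (interior B)) ⊆
          closure (interior (A ∩ B)) := by
        intro x hx
        have h1 : interior (closure (interior B)) ∩ closure (interior A) ⊆
            closure (interior (closure (interior B)) ∩ interior A) :=
          isOpen_interior.inter_closure
        have h2 : interior (closure (interior B)) ∩ interior A ⊆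
            closure (interior A ∩ interior B) := by
          intro y hy
          have h : interior A ∩ closure (interior B) ⊆ closure (interior A ∩ interior B) :=
            isOpen_interior.inter_closure
          exact h ⟨hy.2, interior_subset hy.1⟩
        have h3 : closure (interior (closure (interior B)) ∩ interior A) ⊆
            closure (interior A ∩ interior B) := by
          calc closure (interior (closure (interior B)) ∩ interior A)
              ⊆ closure (closure (interior A ∩ interior B)) := closure_mono h2
            _ = closure (interior A ∩ interior B) := closure_closure
        have hx' : x ∈ closure (interior A ∩ interior B) :=
          h3 (h1 ⟨hx.2, interior_subset hx.1⟩)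
        rwa [← interior_inter] at hx'
      intro x hx
      exact interior_maximal hsub (isOpen_interior.inter isOpen_interior) ⟨hA hx.1, hB hx.2⟩
    isOpen_sUnion := by
      intro S hS x hx
      obtain ⟨t, htS, hxt⟩ := hx
      have h : interior (closure (interior t)) ⊆ interior (closure (interior (⋃₀ S))) :=
        interior_mono (closure_mono (interior_mono (subset_sUnion_of_mem htS)))
      exact h (hS t htS hxt) }

/-- `A` is semi-open w.r.t. `T` if `A ⊆ Cl (Int A)`. -/
def SemiOpen (T : TopologicalSpace X) (A : Set X) : Prop :=
  letI := T
  A ⊆ closure (interior A)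

/-- `A` is semi-closed if its complement is semi-open. -/
def SemiClosed (T : TopologicalSpace X) (A : Set X) : Prop :=
  SemiOpen T Aᶜ

/-- The semi-closure of `A`: the intersection of all semi-closed sets containing `A`. -/
def sCl (T : TopologicalSpace X) (A : Set X) : Set X :=
  ⋂₀ {C | SemiClosed T C ∧ A ⊆ C}

/-- `A` is sg-closed if `sCl A ⊆ U` whenever `A ⊆ U` with `U` semi-open. -/
def SgClosed (T : TopologicalSpace X) (A : Set X) : Prop :=
  ∀ U : Set X, SemiOpen T U → A ⊆ U → sCl T A ⊆ U

/-- `A` is sg-open if its complement is sg-closed. -/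
def SgOpen (T : TopologicalSpace X) (A : Set X) : Prop :=
  SgClosed T Aᶜ

/-- `A` is regular closed w.r.t. `T` if `A = Cl (Int A)`. -/
def RegClosed (T : TopologicalSpace X) (A : Set X) : Prop :=
  letI := T
  A = closure (interior A)

/-- A family `𝒱` refines a family `𝒰` if every member of `𝒱` is contained in a member of `𝒰`. -/
def Refines (𝒱 𝒰 : Set (Set X)) : Prop :=
  ∀ V ∈ 𝒱, ∃ U ∈ 𝒰, V ⊆ U

/-- A family of sets is locally finite if every point has a neighbourhood
meeting only finitely many members. -/
def LocFinite (T : TopologicalSpace X) (𝒱 : Set (Set X)) : Prop :=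
  ∀ x : X, ∃ N ∈ @nhds X T x, {V ∈ 𝒱 | (V ∩ N).Nonempty}.Finite

/-- A family of sets is locally countable if every point has a neighbourhood
meeting only countably many members. -/
def LocCountable (T : TopologicalSpace X) (𝒱 : Set (Set X)) : Prop :=
  ∀ x : X, ∃ N ∈ @nhds X T x, {V ∈ 𝒱 | (V ∩ N).Nonempty}.Countable

/-- A family of sets is discrete if every point has a neighbourhood
meeting at most one member. -/
def DiscreteFam (T : TopologicalSpace X) (𝒱 : Set (Set X)) : Prop :=
  ∀ x : X, ∃ N ∈ @nhds X T x, {V ∈ 𝒱 | (V ∩ N).Nonempty}.Subsingleton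

/-- A family is σ-discrete if it is a countable union of discrete families. -/
def SigmaDiscrete (T : TopologicalSpace X) (𝒱 : Set (Set X)) : Prop :=
  ∃ 𝒲 : ℕ → Set (Set X), 𝒱 = ⋃ n, 𝒲 n ∧ ∀ n, DiscreteFam T (𝒲 n)

/-- A family is closure-preserving if for every subfamily the closure of the
union is the union of the closures. -/
def ClosurePreserving (T : TopologicalSpace X) (𝒲 : Set (Set X)) : Prop :=
  letI := T
  ∀ 𝒲' ⊆ 𝒲, closure (⋃₀ 𝒲') = ⋃ W ∈ 𝒲', closure W

/-- A family is σ-closure-preserving if it is a countable union of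
closure-preserving families. -/
def SigmaClosurePreserving (T : TopologicalSpace X) (𝒱 : Set (Set X)) : Prop :=
  ∃ 𝒲 : ℕ → Set (Set X), 𝒱 = ⋃ n, 𝒲 n ∧ ∀ n, ClosurePreserving T (𝒲 n)

/-- Semi-compact: every semi-open cover has a finite subcover. -/
def SemiCompact (T : TopologicalSpace X) : Prop :=
  ∀ 𝒰 : Set (Set X), (∀ U ∈ 𝒰, SemiOpen T U) → ⋃₀ 𝒰 = univ →
    ∃ 𝒱 ⊆ 𝒰, 𝒱.Finite ∧ ⋃₀ 𝒱 = univ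

/-- S-closed: for every semi-open cover there is a finite subfamily
whose closures cover. -/
def SClosed (T : TopologicalSpace X) : Prop :=
  letI := T
  ∀ 𝒰 : Set (Set X), (∀ U ∈ 𝒰, SemiOpen T U) → ⋃₀ 𝒰 = univ →
    ∃ 𝒱 ⊆ 𝒰, 𝒱.Finite ∧ (⋃ V ∈ 𝒱, closure V) = univ

/-- s-closed: for every semi-open cover there is a finite subfamily
whose semi-closures cover. -/
def SmallSClosed (T : TopologicalSpace X) : Prop :=
  ∀ 𝒰 : Set (Set X), (∀ U ∈ 𝒰, SemiOpen T U) → ⋃₀ 𝒰 = univ →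
    ∃ 𝒱 ⊆ 𝒰, 𝒱.Finite ∧ (⋃ V ∈ 𝒱, sCl T V) = univ

/-- rc-Lindelöf: every regular closed cover has a countable subcover. -/
def RcLindelof (T : TopologicalSpace X) : Prop :=
  ∀ 𝒰 : Set (Set X), (∀ U ∈ 𝒰, RegClosed T U) → ⋃₀ 𝒰 = univ →
    ∃ 𝒱 ⊆ 𝒰, 𝒱.Countable ∧ ⋃₀ 𝒱 = univ

/-- sg-compact: every sg-open cover has a finite subcover. -/
def SgCompact (T : TopologicalSpace X) : Prop :=
  ∀ 𝒰 : Set (Set X), (∀ U ∈ 𝒰, SgOpen T U) → ⋃₀ 𝒰 = univ →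
    ∃ 𝒱 ⊆ 𝒰, 𝒱.Finite ∧ ⋃₀ 𝒱 = univ

/-- `A` is S-closed relative to `X`: every cover of `A` by semi-open sets of `X`
has a finite subfamily whose closures cover `A`. -/
def SClosedRel (T : TopologicalSpace X) (A : Set X) : Prop :=
  letI := T
  ∀ 𝒰 : Set (Set X), (∀ U ∈ 𝒰, SemiOpen T U) → A ⊆ ⋃₀ 𝒰 →
    ∃ 𝒱 ⊆ 𝒰, 𝒱.Finite ∧ A ⊆ ⋃ V ∈ 𝒱, closure V

/-- `A` is s-closed relative to `X`: every cover of `A` by semi-open sets of `X`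
has a finite subfamily whose semi-closures cover `A`. -/
def SmallSClosedRel (T : TopologicalSpace X) (A : Set X) : Prop :=
  ∀ 𝒰 : Set (Set X), (∀ U ∈ 𝒰, SemiOpen T U) → A ⊆ ⋃₀ 𝒰 →
    ∃ 𝒱 ⊆ 𝒰, 𝒱.Finite ∧ A ⊆ ⋃ V ∈ 𝒱, sCl T V

/-- Locally S-closed: every point has a neighbourhood which is S-closed relative to `X`. -/
def LocallySClosed (T : TopologicalSpace X) : Prop :=
  ∀ x : X, ∃ N ∈ @nhds X T x, SClosedRel T N

/-- Locally s-closed: every point has a neighbourhood which is s-closed relative to `X`. -/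
def LocallySmallSClosed (T : TopologicalSpace X) : Prop :=
  ∀ x : X, ∃ N ∈ @nhds X T x, SmallSClosedRel T N

/-- para-S-closed: every semi-open cover has a locally finite refinement by
semi-open sets whose union is dense. -/
def ParaSClosed (T : TopologicalSpace X) : Prop :=
  letI := T
  ∀ 𝒰 : Set (Set X), (∀ U ∈ 𝒰, SemiOpen T U) → ⋃₀ 𝒰 = univ →
    ∃ 𝒱 : Set (Set X), (∀ V ∈ 𝒱, SemiOpen T V) ∧ LocFinite T 𝒱 ∧ Refines 𝒱 𝒰 ∧
      closure (⋃₀ 𝒱) = univ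

/-- para-rc-Lindelöf: every regular closed cover has a locally countable
refinement by regular closed sets. -/
def ParaRcLindelof (T : TopologicalSpace X) : Prop :=
  ∀ 𝒰 : Set (Set X), (∀ U ∈ 𝒰, RegClosed T U) → ⋃₀ 𝒰 = univ →
    ∃ 𝒱 : Set (Set X), (∀ V ∈ 𝒱, RegClosed T V) ∧ LocCountable T 𝒱 ∧ Refines 𝒱 𝒰 ∧
      ⋃₀ 𝒱 = univ

/-- α-subparacompact: every α-open cover has a σ-discrete closed refinement covering `X`. -/
def AlphaSubparacompact (T : TopologicalSpace X) : Prop :=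
  ∀ 𝒰 : Set (Set X), (∀ U ∈ 𝒰, AlphaOpen T U) → ⋃₀ 𝒰 = univ →
    ∃ 𝒱 : Set (Set X), (∀ V ∈ 𝒱, @IsClosed X T V) ∧ SigmaDiscrete T 𝒱 ∧ Refines 𝒱 𝒰 ∧
      ⋃₀ 𝒱 = univ

/-- gα-closed: `Cl_α A ⊆ U` whenever `A ⊆ U` with `U` α-open. -/
def GAlphaClosed (T : TopologicalSpace X) (A : Set X) : Prop :=
  ∀ U : Set X, AlphaOpen T U → A ⊆ U → @closure X (alphaTop T) A ⊆ U

/-- α-paracompact: every α-open cover has a locally finite open refinement. -/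
def AlphaParacompact (T : TopologicalSpace X) : Prop :=
  ∀ 𝒰 : Set (Set X), (∀ U ∈ 𝒰, AlphaOpen T U) → ⋃₀ 𝒰 = univ →
    ∃ 𝒱 : Set (Set X), (∀ V ∈ 𝒱, T.IsOpen V) ∧ LocFinite T 𝒱 ∧ Refines 𝒱 𝒰 ∧
      ⋃₀ 𝒱 = univ

section Helpers

variable (T : TopologicalSpace X)

lemma isOpen_alphaTop_of_isOpen {U : Set X} (hU : T.IsOpen U) :
    (alphaTop T).IsOpen U := by
  letI := T
  show U ⊆ interior (closure (interior U))
  have h : IsOpen U := hU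
  rw [h.interior_eq]
  exact interior_maximal subset_closure h

lemma closure_alphaTop_subset (s : Set X) :
    @closure X (alphaTop T) s ⊆ @closure X T s := by
  letI := T
  refine @closure_minimal X (alphaTop T) s (closure s) subset_closure ?_
  exact @IsClosed.mk X (alphaTop T) _ (isOpen_alphaTop_of_isOpen T isClosed_closure.isOpen_compl)

lemma interior_subset_interior_alphaTop (s : Set X) :
    @interior X T s ⊆ @interior X (alphaTop T) s := by
  letI := T
  exact @interior_maximal X (alphaTop T) s (interior s) interior_subset
    (isOpen_alphaTop_of_isOpen T isOpen_interior)

/-- For a `T`-open set, the closure and the α-closure agree. -/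
lemma closure_subset_closure_alphaTop {U : Set X} (hU : T.IsOpen U) :
    @closure X T U ⊆ @closure X (alphaTop T) U := by
  letI := T
  intro x hx
  rw [@mem_closure_iff X (alphaTop T) x U]
  intro V hV hxV
  have hV' : V ⊆ interior (closure (interior V)) := hV
  have hxW : x ∈ interior (closure (interior V)) := hV' hxV
  obtain ⟨y, hyW, hyU⟩ := (mem_closure_iff.mp hx) _ isOpen_interior hxW
  have hy : y ∈ closure (interior V) := interior_subset hyW
  obtain ⟨z, hz, hzV⟩ := (mem_closure_iff.mp hy) _ (isOpen_interior.inter hU) ⟨hyW, hyU⟩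
  exact ⟨z, interior_subset hzV, hz.2⟩

lemma semiOpen_alphaTop_iff (A : Set X) :
    SemiOpen T A ↔ SemiOpen (alphaTop T) A := by
  letI := T
  constructor
  · intro h x hx
    have h1 : A ⊆ closure (interior A) := h
    have h2 : closure (interior A) ⊆ @closure X (alphaTop T) (interior A) :=
      closure_subset_closure_alphaTop T isOpen_interior
    have h3 : @closure X (alphaTop T) (interior A) ⊆
        @closure X (alphaTop T) (@interior X (alphaTop T) A) :=
      @closure_mono X (alphaTop T) _ _ (interior_subset_interior_alphaTop T A)
    exact h3 (h2 (h1 hx))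
  · intro h x hx
    have h1 : A ⊆ @closure X (alphaTop T) (@interior X (alphaTop T) A) := h
    have hIα : (alphaTop T).IsOpen (@interior X (alphaTop T) A) :=
      @isOpen_interior X (alphaTop T) A
    have hIα' : @interior X (alphaTop T) A ⊆ interior (closure (interior (@interior X (alphaTop T) A))) := hIα
    have h2 : @interior X (alphaTop T) A ⊆ closure (interior A) := by
      intro y hy
      have : y ∈ interior (closure (interior (@interior X (alphaTop T) A))) := hIα' hy
      have hsub : interior (@interior X (alphaTop T) A) ⊆ interior A :=
        interior_mono (@interior_subset X (alphaTop T) A)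
      exact closure_mono hsub (interior_subset this)
    have h3 : @closure X (alphaTop T) (@interior X (alphaTop T) A) ⊆ closure (interior A) := by
      calc @closure X (alphaTop T) (@interior X (alphaTop T) A)
          ⊆ closure (@interior X (alphaTop T) A) := closure_alphaTop_subset T _
        _ ⊆ closure (closure (interior A)) := closure_mono h2
        _ = closure (interior A) := closure_closure
    exact h3 (h1 hx)

lemma semiClosed_alphaTop_iff (A : Set X) :
    SemiClosed T A ↔ SemiClosed (alphaTop T) A :=
  semiOpen_alphaTop_iff T Aᶜ

lemma sCl_alphaTop (A : Set X) : sCl T A = sCl (alphaTop T) A := by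
  have h : {C | SemiClosed T C ∧ A ⊆ C} = {C | SemiClosed (alphaTop T) C ∧ A ⊆ C} := by
    ext C
    simp only [Set.mem_setOf_eq, semiClosed_alphaTop_iff T C]
  unfold sCl
  rw [h]

end Helpers

/-- `SGC(X, 𝒯) = SGC(X, 𝒯^α)`. -/
theorem sgClosed_alphaTop_iff (T : TopologicalSpace X) (A : Set X) :
    SgClosed T A ↔ SgClosed (alphaTop T) A := by
  unfold SgClosed
  rw [← sCl_alphaTop T A]
  constructor
  · intro h U hU hAU
    exact h U ((semiOpen_alphaTop_iff T U).mpr hU) hAU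
  · intro h U hU hAU
    exact h U ((semiOpen_alphaTop_iff T U).mp hU) hAU
end

section
/- A topological space (X, 𝒯^α) is S-closed if and only if (X, 𝒯) is S-closed. -/
open Set TopologicalSpace

universe u v

variable {X : Type u} {Y : Type v}

section Helpers
variable (t : TopologicalSpace X)

lemma mem_closure_iff' {s : Set X} {x : X} :
    x ∈ @closure X t s ↔ ∀ o, t.IsOpen o → x ∈ o → (o ∩ s).Nonempty := by
  letI := t; exact mem_closure_iff

lemma closure_mono' {s u : Set X} (h : s ⊆ u) : @closure X t s ⊆ @closure X t u := by
  letI := t; exact closure_mono h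

lemma interior_subset' (s : Set X) : @interior X t s ⊆ s := by
  letI := t; exact interior_subset

lemma isOpen_interior' (s : Set X) : t.IsOpen (@interior X t s) := by
  letI := t; exact isOpen_interior

lemma interior_maximal' {s u : Set X} (h₁ : u ⊆ s) (h₂ : t.IsOpen u) :
    u ⊆ @interior X t s := by
  letI := t; exact interior_maximal h₁ h₂

end Helpers

lemma open_alphaOpen' (T : TopologicalSpace X) {A : Set X} (h : T.IsOpen A) :
    (alphaTop T).IsOpen A := by
  letI := T
  show A ⊆ interior (closure (interior A))
  rw [IsOpen.interior_eq h]
  exact (IsOpen.subset_interior_iff h).mpr subset_closure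

lemma alpha_closure_subset (T : TopologicalSpace X) (s : Set X) :
    @closure X (alphaTop T) s ⊆ @closure X T s := by
  intro x hx
  rw [mem_closure_iff' T]
  intro o ho hxo
  exact (mem_closure_iff' (alphaTop T)).1 hx o (open_alphaOpen' T ho) hxo

lemma alpha_closure_open_eq (T : TopologicalSpace X) {U : Set X} (hU : T.IsOpen U) :
    @closure X (alphaTop T) U = @closure X T U := by
  letI := T
  apply Subset.antisymm (alpha_closure_subset T U)
  intro x hx
  rw [mem_closure_iff' (alphaTop T)]
  intro W hW hxW
  have hWsub : W ⊆ interior (closure (interior W)) := hW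
  have hxO : x ∈ interior (closure (interior W)) := hWsub hxW
  obtain ⟨y, hyO, hyU⟩ := (mem_closure_iff.1 hx) _ isOpen_interior hxO
  have hyCl : y ∈ closure (interior W) := interior_subset hyO
  obtain ⟨z, hzU, hzW⟩ := (mem_closure_iff.1 hyCl) U hU hyU
  exact ⟨z, interior_subset hzW, hzU⟩

lemma semiOpen_alpha_iff (T : TopologicalSpace X) (A : Set X) :
    SemiOpen (alphaTop T) A ↔ SemiOpen T A := by
  letI := T
  constructor
  · intro h
    have h1 : @interior X (alphaTop T) A ⊆ closure (interior A) := by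
      have h2 : @interior X (alphaTop T) A ⊆
          interior (closure (interior (@interior X (alphaTop T) A))) :=
        isOpen_interior' (alphaTop T) A
      refine h2.trans (interior_subset.trans (closure_mono (interior_mono ?_)))
      exact interior_subset' (alphaTop T) A
    intro x hx
    have hx1 := (alpha_closure_subset T (@interior X (alphaTop T) A)) (h hx)
    have hx2 := (closure_mono h1) hx1
    rwa [closure_closure] at hx2
  · intro h
    intro x hx
    have h1 : interior A ⊆ @interior X (alphaTop T) A :=
      interior_maximal' (alphaTop T) interior_subset (open_alphaOpen' T isOpen_interior)
    have h2 : closure (interior A) ⊆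
        @closure X (alphaTop T) (@interior X (alphaTop T) A) := by
      rw [← alpha_closure_open_eq T isOpen_interior]
      exact closure_mono' (alphaTop T) h1
    exact h2 (h hx)

lemma alpha_closure_semiOpen_eq (T : TopologicalSpace X) {V : Set X}
    (hV : SemiOpen T V) : @closure X (alphaTop T) V = @closure X T V := by
  letI := T
  apply Subset.antisymm (alpha_closure_subset T V)
  have h1 : closure V ⊆ closure (interior V) := by
    have := closure_mono hV
    rwa [closure_closure] at this
  refine h1.trans ?_
  rw [← alpha_closure_open_eq T isOpen_interior]
  exact closure_mono' (alphaTop T) interior_subset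

/-- `(X, 𝒯^α)` is S-closed iff `(X, 𝒯)` is S-closed. -/
theorem sClosed_alphaTop_iff (T : TopologicalSpace X) :
    SClosed (alphaTop T) ↔ SClosed T := by
  letI := T
  constructor
  · intro h 𝒰 hso hcov
    obtain ⟨𝒱, h𝒱, hfin, hU⟩ := h 𝒰 (fun U hU => (semiOpen_alpha_iff T U).2 (hso U hU)) hcov
    refine ⟨𝒱, h𝒱, hfin, ?_⟩
    rw [← hU]
    apply iUnion₂_congr
    intro V hV
    exact (alpha_closure_semiOpen_eq T (hso V (h𝒱 hV))).symm
  · intro h 𝒰 hso hcov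
    obtain ⟨𝒱, h𝒱, hfin, hU⟩ := h 𝒰 (fun U hU => (semiOpen_alpha_iff T U).1 (hso U hU)) hcov
    refine ⟨𝒱, h𝒱, hfin, ?_⟩
    rw [← hU]
    apply iUnion₂_congr
    intro V hV
    exact alpha_closure_semiOpen_eq T ((semiOpen_alpha_iff T V).1 (hso V (h𝒱 hV)))
end
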